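/- Fix n ≥ 1 and let J be a maximal (for inclusion) adjacency-avoiding subset of I_n. Then: (i) ⟦1,n⟧ ∈ J; (ii) if K, L ∈ J with b(K) ≤ e(L), then ⟦b(K), e(L)⟧ ∈ J; (iii) if K, L ∈ J and K ∩ L ≠ ∅, then K ∩ L ∈ J. -/
import Mathlib


/-- `K` is an interval of `{1, …, n}`: a set `⟦i,j⟧ = {i, i+1, …, j}` with `1 ≤ i ≤ j ≤ n`. -/
def IsInterval (n : ℕ) (K : Set ℕ) : Prop :=
  ∃ i j, 1 ≤ i ∧ i ≤ j ∧ j ≤ n ∧ K = Set.Icc i j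

/-- The lower bound `b(K)` of an interval `K`. -/
noncomputable def intB (K : Set ℕ) : ℕ := sInf K

/-- The upper bound `e(K)` of an interval `K`. -/
noncomputable def intE (K : Set ℕ) : ℕ := sSup K

/-- `J(B, E)`: the set of intervals `K` of `{1, …, n}` with `b(K) ∈ B` and `e(K) ∈ E`. -/
def intervalsOf (n : ℕ) (B E : Set ℕ) : Set (Set ℕ) :=
  {K | IsInterval n K ∧ intB K ∈ B ∧ intE K ∈ E}

/-- Two intervals `K`, `L` are adjacent if `b(K) = e(L) + 1` or `b(L) = e(K) + 1`. -/
def Adjacent (K L : Set ℕ) : Prop :=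
  intB K = intE L + 1 ∨ intB L = intE K + 1

/-- An interval set is adjacency-avoiding if it contains no pair of adjacent intervals. -/
def AdjAvoiding (J : Set (Set ℕ)) : Prop :=
  ∀ K ∈ J, ∀ L ∈ J, ¬ Adjacent K L

/-- The shift `A[1] = {a + 1 : a ∈ A}` of a set of integers. -/
def shiftSet (A : Set ℕ) : Set ℕ := (· + 1) '' A


lemma intB_Icc {i j : ℕ} (h : i ≤ j) : intB (Set.Icc i j) = i := by
  simp [intB, csInf_Icc h]

lemma intE_Icc {i j : ℕ} (h : i ≤ j) : intE (Set.Icc i j) = j := by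
  simp [intE, csSup_Icc h]

lemma intB_le_intE {n : ℕ} {K : Set ℕ} (h : IsInterval n K) : intB K ≤ intE K := by
  obtain ⟨i, j, hi, hij, hj, rfl⟩ := h
  rw [intB_Icc hij, intE_Icc hij]; exact hij

lemma one_le_intB {n : ℕ} {K : Set ℕ} (h : IsInterval n K) : 1 ≤ intB K := by
  obtain ⟨i, j, hi, hij, hj, rfl⟩ := h
  rw [intB_Icc hij]; exact hi

lemma intE_le {n : ℕ} {K : Set ℕ} (h : IsInterval n K) : intE K ≤ n := by
  obtain ⟨i, j, hi, hij, hj, rfl⟩ := h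
  rw [intE_Icc hij]; exact hj

/-- Properties of a maximal (for inclusion) adjacency-avoiding subset `J` of `I_n`:
(i) `⟦1,n⟧ ∈ J`; (ii) if `K, L ∈ J` with `b(K) ≤ e(L)` then `⟦b(K), e(L)⟧ ∈ J`;
(iii) if `K, L ∈ J` intersect then `K ∩ L ∈ J`. -/
theorem maximal_adjAvoiding_closure (n : ℕ) (hn : 1 ≤ n) (J : Set (Set ℕ))
    (hJint : ∀ K ∈ J, IsInterval n K)
    (hJ : AdjAvoiding J)
    (hmax : ∀ K : Set ℕ, IsInterval n K → K ∉ J → ¬ AdjAvoiding (J ∪ {K})) :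
    Set.Icc 1 n ∈ J ∧
      (∀ K ∈ J, ∀ L ∈ J, intB K ≤ intE L → Set.Icc (intB K) (intE L) ∈ J) ∧
      (∀ K ∈ J, ∀ L ∈ J, (K ∩ L).Nonempty → K ∩ L ∈ J) := by
  have key : ∀ K : Set ℕ, IsInterval n K →
      (∀ M ∈ J, intB K ≠ intE M + 1) → (∀ M ∈ J, intB M ≠ intE K + 1) → K ∈ J := by
    intro K hK h1 h2
    by_contra hKJ
    apply hmax K hK hKJ
    intro A hA B hB hadj
    have hself : ¬ Adjacent K K := by
      have := intB_le_intE hK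
      rintro (h | h) <;> omega
    rcases hA with hA | hA <;> rcases hB with hB | hB
    · exact hJ A hA B hB hadj
    · rcases Set.mem_singleton_iff.mp hB with rfl
      rcases hadj with h | h
      · exact h2 A hA h
      · exact h1 A hA h
    · rcases Set.mem_singleton_iff.mp hA with rfl
      rcases hadj with h | h
      · exact h1 B hB h
      · exact h2 B hB h
    · rcases Set.mem_singleton_iff.mp hA with rfl
      rcases Set.mem_singleton_iff.mp hB with rfl
      exact hself hadj
  have part2 : ∀ K ∈ J, ∀ L ∈ J, intB K ≤ intE L → Set.Icc (intB K) (intE L) ∈ J := by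
    intro K hK L hL hle
    have hKi := hJint K hK
    have hLi := hJint L hL
    have hint : IsInterval n (Set.Icc (intB K) (intE L)) :=
      ⟨intB K, intE L, one_le_intB hKi, hle, intE_le hLi, rfl⟩
    apply key _ hint
    · intro M hM h
      rw [intB_Icc hle] at h
      exact hJ K hK M hM (Or.inl h)
    · intro M hM h
      rw [intE_Icc hle] at h
      exact hJ M hM L hL (Or.inl h)
  constructor
  · apply key _ ⟨1, n, le_refl 1, hn, le_refl n, rfl⟩
    · intro M hM h
      rw [intB_Icc hn] at h
      have := one_le_intB (hJint M hM)
      have := intB_le_intE (hJint M hM)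
      omega
    · intro M hM h
      rw [intE_Icc hn] at h
      have := intE_le (hJint M hM)
      have := intB_le_intE (hJint M hM)
      have := one_le_intB (hJint M hM)
      omega
  refine ⟨part2, ?_⟩
  intro K hK L hL hne
  obtain ⟨i, j, hi, hij, hj, rfl⟩ := hJint K hK
  obtain ⟨i', j', hi', hij', hj', rfl⟩ := hJint L hL
  rw [Set.Icc_inter_Icc] at hne ⊢
  have hle : max i i' ≤ min j j' := by
    obtain ⟨x, hx⟩ := hne
    simp only [Set.mem_Icc] at hx
    omega
  rcases le_total i i' with hii | hii <;> rcases le_total j j' with hjj | hjj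
  · rw [max_eq_right hii, min_eq_left hjj] at hle ⊢
    have := part2 _ hL _ hK (by rw [intB_Icc hij', intE_Icc hij]; exact hle)
    rwa [intB_Icc hij', intE_Icc hij] at this
  · rw [max_eq_right hii, min_eq_right hjj] at hle ⊢
    have := part2 _ hL _ hL (by rw [intB_Icc hij', intE_Icc hij']; exact hle)
    rw [intB_Icc hij', intE_Icc hij'] at this
    exact this
  · rw [max_eq_left hii, min_eq_left hjj] at hle ⊢
    have := part2 _ hK _ hK (by rw [intB_Icc hij, intE_Icc hij]; exact hle)
    rwa [intB_Icc hij, intE_Icc hij] at this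
  · rw [max_eq_left hii, min_eq_right hjj] at hle ⊢
    have := part2 _ hK _ hL (by rw [intB_Icc hij, intE_Icc hij']; exact hle)
    rwa [intB_Icc hij, intE_Icc hij'] at this
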